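/- Let T be a complete first-order theory with monster model 𝔠, φ(x̄;ȳ) a partitioned formula with independence dimension N, Δ = Δ_{N,φ}, (P, ⊴) a partial order, ⟨b̄_i : i ∈ P⟩ a Δ-indiscernible sequence indexed by P, and ā a tuple. Define f : P → {0,1} by f(i) = 1 iff ⊨ φ(ā; b̄_i). Then f is an N-indiscernible coloring of P: (i) every antichain A ⊆ P has at most N elements on which f takes one of the two values, and (ii) no chain i₀ ◁ ... ◁ i_{2N+1} in P has f alternating at every step. -/
import Mathlib


open FirstOrder

variable {L : Language} {M : Type*} [L.Structure M] {α β : Type*}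

/-- An antichain of a partial order. -/
def IsAC {P : Type*} [PartialOrder P] (A : Set P) : Prop := ∀ i ∈ A, ∀ j ∈ A, ¬ i < j

/-- An `N`-indiscernible coloring of an arbitrary partial order: every antichain has a
color occurring only finitely often, at most `N` times, and no chain alternates colors
more than `2N+1` times. -/
def IsIndiscColoring {P : Type*} [PartialOrder P] (N : ℕ) (f : P → ZMod 2) : Prop :=
  (∀ A : Set P, IsAC A → ∃ t : ZMod 2,
    (A ∩ f ⁻¹' {t}).Finite ∧ (A ∩ f ⁻¹' {t}).ncard ≤ N) ∧
  ¬ ∃ g : ℕ → P, (∀ ℓ < 2 * N + 1, g ℓ < g (ℓ + 1)) ∧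
      (∀ ℓ < 2 * N + 1, f (g ℓ) ≠ f (g (ℓ + 1)))

/-- A finite family of `lg(ȳ)`-tuples is `φ`-independent: every Boolean pattern on it is
realized by an instance of `φ`. -/
def PhiIndep (φ : L.Formula (α ⊕ β)) (B : Finset (β → M)) : Prop :=
  ∀ s : (β → M) → Bool, ∃ a : α → M, ∀ b ∈ B,
    (φ.Realize (Sum.elim a b) ↔ s b = true)

/-- `φ` has independence dimension `N`: `N` is maximal admitting a `φ`-independent set of
size `N`. -/
def HasIndepDim (φ : L.Formula (α ⊕ β)) (N : ℕ) : Prop :=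
  (∃ B : Finset (β → M), B.card = N ∧ PhiIndep φ B) ∧
  ∀ B : Finset (β → M), PhiIndep φ B → B.card ≤ N

/-- `⟨b i : i ∈ P⟩` is `Δ_{N,φ}`-indiscernible with respect to the partial order `P`:
tuples of distinct indices with the same quantifier-free order type satisfy the same
formulas `∃x̄ ⋀_{k ≤ N} φ(x̄; z̄_k)^{s(k)}`. -/
def DeltaIndisc (N : ℕ) (φ : L.Formula (α ⊕ β)) {P : Type*} [PartialOrder P]
    (b : P → β → M) : Prop :=
  ∀ i j : Fin (N + 1) → P, Function.Injective i → Function.Injective j →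
    (∀ k l, i k ≤ i l ↔ j k ≤ j l) →
    ∀ s : Fin (N + 1) → Bool,
      ((∃ a : α → M, ∀ k, (φ.Realize (Sum.elim a (b (i k))) ↔ s k = true)) ↔
        (∃ a : α → M, ∀ k, (φ.Realize (Sum.elim a (b (j k))) ↔ s k = true)))


/-- Extract an injective `Fin (N+1)`-tuple from a set that is not small. -/
lemma exists_inj_tuple {P : Type*} (S : Set P) (N : ℕ)
    (h : ¬ (S.Finite ∧ S.ncard ≤ N)) :
    ∃ i : Fin (N + 1) → P, Function.Injective i ∧ ∀ k, i k ∈ S := by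
  obtain ⟨t, hts, htc⟩ : ∃ t : Finset P, ↑t ⊆ S ∧ t.card = N + 1 := by
    by_cases hfin : S.Finite
    · have hcard : N + 1 ≤ S.ncard := by
        by_contra hc
        exact h ⟨hfin, by omega⟩
      rw [Set.ncard_eq_toFinset_card _ hfin] at hcard
      obtain ⟨B, hB, hBc⟩ := hfin.toFinset.exists_subset_card_eq hcard
      exact ⟨B, fun x hx => hfin.mem_toFinset.mp (hB hx), hBc⟩
    · exact (Set.not_infinite.not_right.mpr hfin).exists_subset_card_eq (N + 1)
  let e := t.equivFin
  refine ⟨fun k => (e.symm (Fin.cast htc.symm k) : P), ?_, fun k => hts (e.symm _).2⟩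
  intro k l hkl
  have := e.symm.injective (Subtype.ext hkl)
  simpa [Fin.ext_iff] using this

/-- Key lemma: no `Fin (N+1)`-tuple can realize every Boolean pattern if `φ` has
independence dimension `N`. -/
lemma key_lemma (φ : L.Formula (α ⊕ β)) (N : ℕ) (hdim : HasIndepDim (M := M) φ N)
    (c : Fin (N + 1) → β → M)
    (h : ∀ s : Fin (N + 1) → Bool,
      ∃ a : α → M, ∀ k, (φ.Realize (Sum.elim a (c k)) ↔ s k = true)) : False := by
  classical
  have hcinj : Function.Injective c := by
    intro k l hkl
    by_contra hne
    obtain ⟨a, ha⟩ := h (fun m => decide (m = k))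
    have h1 := ha k
    have h2 := ha l
    rw [hkl] at h1
    simp only [decide_eq_true_eq] at h1 h2
    exact hne (h2.mp (h1.mpr trivial)).symm
  have hB : PhiIndep φ (Finset.image c Finset.univ) := by
    intro s
    obtain ⟨a, ha⟩ := h (fun k => s (c k))
    refine ⟨a, fun b hb => ?_⟩
    obtain ⟨k, _, rfl⟩ := Finset.mem_image.mp hb
    exact ha k
  have := hdim.2 _ hB
  rw [Finset.card_image_of_injective _ hcinj, Finset.card_univ, Fintype.card_fin] at this
  omega

/-- Lemma 3.7: for `φ` of independence dimension `N`, a `Δ_{N,φ}`-indiscernible sequence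
indexed by a partial order `P`, and any tuple `ā`, the coloring `f(i) = 1` iff
`⊨ φ(ā; b̄_i)` is an `N`-indiscernible coloring of `P`. -/
theorem stmt_11 (φ : L.Formula (α ⊕ β)) (N : ℕ) (hdim : HasIndepDim (M := M) φ N)
    {P : Type*} [PartialOrder P] (b : P → β → M) (hind : DeltaIndisc N φ b)
    (a : α → M) (f : P → ZMod 2)
    (hf : ∀ i, f i = 1 ↔ φ.Realize (Sum.elim a (b i))) :
    IsIndiscColoring N f := by
  classical
  have hzmod : ∀ x y : ZMod 2, x ≠ y → y = x + 1 := by decide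
  constructor
  · -- antichain part
    intro A hAC
    by_contra hno
    have h1 : ¬ ((A ∩ f ⁻¹' {1}).Finite ∧ (A ∩ f ⁻¹' {1}).ncard ≤ N) :=
      fun hh => hno ⟨1, hh⟩
    have h0 : ¬ ((A ∩ f ⁻¹' {0}).Finite ∧ (A ∩ f ⁻¹' {0}).ncard ≤ N) :=
      fun hh => hno ⟨0, hh⟩
    obtain ⟨i, hiinj, hiS⟩ := exists_inj_tuple _ N h1
    obtain ⟨j, hjinj, hjS⟩ := exists_inj_tuple _ N h0
    have hiA : ∀ k, i k ∈ A := fun k => (hiS k).1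
    have hjA : ∀ k, j k ∈ A := fun k => (hjS k).1
    have hfi : ∀ k, f (i k) = 1 := fun k => (hiS k).2
    have hfj : ∀ k, f (j k) = 0 := fun k => (hjS k).2
    have hle : ∀ x ∈ A, ∀ y ∈ A, x ≤ y → x = y := by
      intro x hx y hy hxy
      by_contra hne
      exact hAC x hx y hy (lt_of_le_of_ne hxy hne)
    refine key_lemma φ N hdim (fun k => b (i k)) (fun s => ?_)
    set d : Fin (N + 1) → P := fun k => if s k then i k else j k with hd
    have hdA : ∀ k, d k ∈ A := by
      intro k; by_cases hs : s k <;> simp [hd, hs, hiA, hjA]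
    have hfd : ∀ k, f (d k) = if s k then 1 else 0 := by
      intro k; by_cases hs : s k <;> simp [hd, hs, hfi, hfj]
    have hdinj : Function.Injective d := by
      intro k l hkl
      have hfe : (if s k then (1 : ZMod 2) else 0) = if s l then 1 else 0 := by
        rw [← hfd k, ← hfd l, hkl]
      by_cases hk : s k <;> by_cases hl : s l <;> simp [hd, hk, hl] at hfe hkl ⊢
      · exact hiinj hkl
      · exact hjinj hkl
    have horder : ∀ k l, d k ≤ d l ↔ i k ≤ i l := by
      intro k l
      constructor
      · intro h
        have := hdinj (hle _ (hdA k) _ (hdA l) h)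
        subst this; exact le_refl _
      · intro h
        have := hiinj (hle _ (hiA k) _ (hiA l) h)
        subst this; exact le_refl _
    have hpat : ∃ a' : α → M, ∀ k, (φ.Realize (Sum.elim a' (b (d k))) ↔ s k = true) := by
      refine ⟨a, fun k => ?_⟩
      rw [← hf]
      rw [hfd k]
      by_cases hs : s k <;> simp [hs]
    exact (hind d i hdinj hiinj horder s).mp hpat
  · -- chain part
    rintro ⟨g, hmono, halt⟩
    have hlt : ∀ m n : ℕ, m < n → n ≤ 2 * N + 1 → g m < g n := by
      intro m n hmn hn
      induction n with
      | zero => omega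
      | succ n ih =>
        rcases Nat.lt_succ_iff_lt_or_eq.mp hmn with h | h
        · exact lt_trans (ih h (by omega)) (hmono n (by omega))
        · subst h; exact hmono m (by omega)
    have hstep : ∀ ℓ < 2 * N + 1, f (g (ℓ + 1)) = f (g ℓ) + 1 :=
      fun ℓ hℓ => hzmod _ _ (halt ℓ hℓ)
    set i : Fin (N + 1) → P := fun k => g (2 * k.val) with hi
    have himono : StrictMono i := by
      intro k l hkl
      exact hlt _ _ (by omega) (by omega)
    refine key_lemma φ N hdim (fun k => b (i k)) (fun s => ?_)
    set t : Fin (N + 1) → ZMod 2 := fun k => if s k then 1 else 0 with ht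
    set hh : Fin (N + 1) → ℕ :=
      fun k => if f (g (2 * k.val)) = t k then 2 * k.val else 2 * k.val + 1 with hhh
    have hhlb : ∀ k, 2 * k.val ≤ hh k := by
      intro k; by_cases hc : f (g (2 * k.val)) = t k <;> simp [hhh, hc]
    have hhub : ∀ k, hh k ≤ 2 * k.val + 1 := by
      intro k; by_cases hc : f (g (2 * k.val)) = t k <;> simp [hhh, hc]
    have hfh : ∀ k, f (g (hh k)) = t k := by
      intro k
      by_cases hc : f (g (2 * k.val)) = t k
      · simp [hhh, hc]
      · have h1 : hh k = 2 * k.val + 1 := by simp [hhh, hc]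
        rw [h1, hstep (2 * k.val) (by omega)]
        have : ∀ x y : ZMod 2, x ≠ y → x + 1 = y := by decide
        exact this _ _ hc
    set c : Fin (N + 1) → P := fun k => g (hh k) with hc
    have hcmono : StrictMono c := by
      intro k l hkl
      have h1 : hh k < hh l := by
        have := hhub k
        have := hhlb l
        have : (k : ℕ) < l := hkl
        omega
      exact hlt _ _ h1 (by have := hhub l; omega)
    have horder : ∀ k l, c k ≤ c l ↔ i k ≤ i l := by
      intro k l
      rw [hcmono.le_iff_le, himono.le_iff_le]
    have hpat : ∃ a' : α → M, ∀ k, (φ.Realize (Sum.elim a' (b (c k))) ↔ s k = true) := by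
      refine ⟨a, fun k => ?_⟩
      rw [← hf, hfh k]
      by_cases hs : s k <;> simp [ht, hs]
    exact (hind c i hcmono.injective himono.injective horder s).mp hpat
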